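/- arXiv:2005.09281 — 2 statements merged into one kernel-verified Lean document; each statement's English description precedes it below -/
import Mathlib

section
/- Let Σ = {a_1 < a_2 < … < a_n} be a strictly totally ordered finite alphabet. The standard weight measure μ_Σ, i.e. the weight measure over Σ with values in (ℕ,+) given by μ_Σ(a_i) = i for all 1 ≤ i ≤ n, is gapfree, injective, and alphabetically ordered. -/
/-- The weight of a word: the sum of the weights of its letters. -/
def weight {α A : Type*} [AddCommMonoid A] [LinearOrder A] [IsOrderedCancelAddMonoid A] (μ : α → A) (w : List α) : A :=
  (w.map μ).sum

/-- The factor-weight function: `factorWeight μ w i` is the maximum weight of a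
length-`i` factor (contiguous subword) of `w`. -/
def factorWeight {α A : Type*} [AddCommMonoid A] [LinearOrder A] [IsOrderedCancelAddMonoid A] (μ : α → A)
    (w : List α) (i : ℕ) : A :=
  ((List.range (w.length + 1 - i)).map fun j => weight μ ((w.drop j).take i)).foldr max 0

/-- A word is `μ`-prefix normal if its factor-weight function agrees with its
prefix-weight function. -/
def PrefixNormal {α A : Type*} [AddCommMonoid A] [LinearOrder A] [IsOrderedCancelAddMonoid A] (μ : α → A)
    (w : List α) : Prop :=
  ∀ i ≤ w.length, factorWeight μ w i = weight μ (w.take i)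

/-- A weight measure is gapfree if for every word `w` and every `1 ≤ i ≤ |w|` there is a
letter `a` with `f_{w,μ}(i) = f_{w,μ}(i-1) + μ a`. -/
def Gapfree {α A : Type*} [AddCommMonoid A] [LinearOrder A] [IsOrderedCancelAddMonoid A] (μ : α → A) : Prop :=
  ∀ w : List α, ∀ i, 1 ≤ i → i ≤ w.length →
    ∃ a : α, factorWeight μ w i = factorWeight μ w (i - 1) + μ a

/-- The standard weight measure of a strictly totally ordered alphabet
`Σ = {a_1 < a_2 < … < a_n}` (modelled as `Fin n`): `μ_Σ(a_i) = i`. -/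
def standardWeightMeasure (n : ℕ) : Fin n → ℕ := fun a => (a : ℕ) + 1

private lemma foldr_max_mem : ∀ (l : List ℕ), l ≠ [] → l.foldr max 0 ∈ l
  | [a], _ => by simp
  | a :: b :: t, _ => by
    have ih := foldr_max_mem (b :: t) (by simp)
    rcases max_choice a ((b :: t).foldr max 0) with h | h
    · rw [List.foldr_cons, h]; exact List.mem_cons_self
    · rw [List.foldr_cons, h]; exact List.mem_cons_of_mem _ ih

private lemma le_foldr_max {l : List ℕ} {a : ℕ} (h : a ∈ l) : a ≤ l.foldr max 0 := by
  induction l with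
  | nil => simp at h
  | cons b t ih =>
    rcases List.mem_cons.1 h with rfl | h
    · exact le_max_left _ _
    · exact le_trans (ih h) (le_max_right _ _)

private lemma factorWeight_eq {n : ℕ} (μ : Fin n → ℕ) (w : List (Fin n)) (i : ℕ)
    (hi : i ≤ w.length) :
    ∃ j, j + i ≤ w.length ∧ factorWeight μ w i = weight μ ((w.drop j).take i) := by
  have hne : (List.range (w.length + 1 - i)).map
      (fun j => weight μ ((w.drop j).take i)) ≠ [] := by
    simp only [ne_eq, List.map_eq_nil_iff, List.range_eq_nil]
    omega
  have hmem := foldr_max_mem _ hne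
  rw [List.mem_map] at hmem
  obtain ⟨j, hj, hEq⟩ := hmem
  rw [List.mem_range] at hj
  exact ⟨j, by omega, hEq.symm⟩

private lemma le_factorWeight {n : ℕ} (μ : Fin n → ℕ) (w : List (Fin n)) {i j : ℕ}
    (hj : j + i ≤ w.length) :
    weight μ ((w.drop j).take i) ≤ factorWeight μ w i := by
  apply le_foldr_max
  rw [List.mem_map]
  exact ⟨j, List.mem_range.2 (by omega), rfl⟩

private lemma weight_take_succ {n : ℕ} (μ : Fin n → ℕ) (t : List (Fin n)) {k : ℕ}
    (hk : k < t.length) :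
    weight μ (t.take (k + 1)) = weight μ (t.take k) + μ (t.get ⟨k, hk⟩) := by
  rw [List.take_succ, List.getElem?_eq_getElem hk]
  rw [weight, weight, List.map_append, List.sum_append]
  simp

/-- The standard weight measure is gapfree, injective and alphabetically ordered. -/
theorem standardWeightMeasure_gapfree_injective_monotone (n : ℕ) :
    Gapfree (standardWeightMeasure n) ∧
    Function.Injective (standardWeightMeasure n) ∧
    (∀ a b : Fin n, a ≤ b → standardWeightMeasure n a ≤ standardWeightMeasure n b) := by
  refine ⟨?_, ?_, ?_⟩
  · intro w i hi1 hiw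
    set μ := standardWeightMeasure n with hμ
    have hμ1 : ∀ a : Fin n, 1 ≤ μ a ∧ μ a ≤ n := by
      intro a
      constructor
      · simp [hμ, standardWeightMeasure]
      · have := a.isLt; simp [hμ, standardWeightMeasure]
    have hn : 1 ≤ n := by
      have h0 : 0 < w.length := by omega
      exact (w.get ⟨0, h0⟩).pos
    -- upper bound: F i ≤ F (i-1) + n
    obtain ⟨j, hj, hFj⟩ := factorWeight_eq μ w i hiw
    have hlen : i - 1 < (w.drop j).length := by
      rw [List.length_drop]; omega
    have hdec : weight μ ((w.drop j).take i)
        = weight μ ((w.drop j).take (i - 1)) + μ ((w.drop j).get ⟨i - 1, hlen⟩) := by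
      have := weight_take_succ μ (w.drop j) hlen
      rwa [show i - 1 + 1 = i by omega] at this
    have hupper : factorWeight μ w i ≤ factorWeight μ w (i - 1) + n := by
      rw [hFj, hdec]
      have h1 : weight μ ((w.drop j).take (i - 1)) ≤ factorWeight μ w (i - 1) :=
        le_factorWeight μ w (by omega)
      have h2 := (hμ1 ((w.drop j).get ⟨i - 1, hlen⟩)).2
      omega
    -- lower bound: F (i-1) + 1 ≤ F i
    obtain ⟨j', hj', hFj'⟩ := factorWeight_eq μ w (i - 1) (by omega)
    have hlower : factorWeight μ w (i - 1) + 1 ≤ factorWeight μ w i := by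
      by_cases hcase : j' + i ≤ w.length
      · -- extend forward
        have hlen' : i - 1 < (w.drop j').length := by rw [List.length_drop]; omega
        have hdec' : weight μ ((w.drop j').take i)
            = weight μ ((w.drop j').take (i - 1)) + μ ((w.drop j').get ⟨i - 1, hlen'⟩) := by
          have := weight_take_succ μ (w.drop j') hlen'
          rwa [show i - 1 + 1 = i by omega] at this
        have h1 : weight μ ((w.drop j').take i) ≤ factorWeight μ w i :=
          le_factorWeight μ w hcase
        have h2 := (hμ1 ((w.drop j').get ⟨i - 1, hlen'⟩)).1
        omega
      · -- extend backward
        have hj'1 : 1 ≤ j' := by omega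
        have hlt : j' - 1 < w.length := by omega
        have hdropeq : w.drop (j' - 1) = w[j' - 1] :: w.drop j' := by
          rw [List.drop_eq_getElem_cons hlt, show j' - 1 + 1 = j' by omega]
        have hdec' : weight μ ((w.drop (j' - 1)).take i)
            = μ (w[j' - 1]) + weight μ ((w.drop j').take (i - 1)) := by
          rw [hdropeq, show i = (i - 1) + 1 by omega, List.take_succ_cons]
          simp [weight]
        have h1 : weight μ ((w.drop (j' - 1)).take i) ≤ factorWeight μ w i :=
          le_factorWeight μ w (by omega)
        have h2 := (hμ1 (w[j' - 1])).1
        omega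
    -- conclude
    set d := factorWeight μ w i - factorWeight μ w (i - 1) with hd
    have hd1 : 1 ≤ d := by omega
    have hdn : d ≤ n := by omega
    refine ⟨⟨d - 1, by omega⟩, ?_⟩
    have : μ ⟨d - 1, by omega⟩ = d := by
      simp [hμ, standardWeightMeasure]; omega
    rw [this]; omega
  · intro a b h
    exact Fin.ext (by simpa [standardWeightMeasure] using h)
  · intro a b h
    simpa [standardWeightMeasure] using h
end

section
/- Subset prefix normality is expressible by weighted prefix normality: let Σ be a finite alphabet, X ⊆ Σ, and let μ be the weight measure over Σ with values in (ℕ,+) given by μ(x) = 2 for x ∈ X and μ(y) = 1 for y ∈ Σ \ X. Then for every word w ∈ Σ*, w is μ-prefix normal if and only if w is X-prefix normal, i.e. for every 0 ≤ i ≤ |w| the maximum number of letters from X in a length-i factor of w equals the number of letters from X in the length-i prefix of w. -/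
/-- The maximum-`X`-factor function: the maximum number of letters from `X` occurring
in a length-`i` factor of `w`. -/
def maxSubsetCount {α : Type*} [DecidableEq α] (X : Finset α) (w : List α) (i : ℕ) : ℕ :=
  ((List.range (w.length + 1 - i)).map
    fun j => ((w.drop j).take i).countP (fun a => a ∈ X)).foldr max 0

lemma weight_eq {α : Type*} [DecidableEq α] (X : Finset α) (u : List α) :
    weight (fun a : α => if a ∈ X then 2 else 1) u
      = u.length + u.countP (fun a => decide (a ∈ X)) := by
  induction u with
  | nil => simp [weight]
  | cons a t ih =>
    simp only [weight, List.map_cons, List.sum_cons, List.length_cons, List.countP_cons] at *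
    by_cases h : a ∈ X <;> simp [h, ih] <;> omega

lemma foldr_max_add (i : ℕ) : ∀ l : List ℕ, l ≠ [] →
    ((l.map (i + ·)).foldr max 0) = i + l.foldr max 0
  | [a], _ => by simp
  | (a :: b :: t), _ => by
    have ih := foldr_max_add i (b :: t) (by simp)
    simp only [List.map_cons, List.foldr_cons] at *
    rw [ih]; omega

lemma factorWeight_eq_s19 {α : Type*} [DecidableEq α] (X : Finset α) (w : List α) (i : ℕ)
    (hi : i ≤ w.length) :
    factorWeight (fun a : α => if a ∈ X then 2 else 1) w i = i + maxSubsetCount X w i := by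
  unfold factorWeight maxSubsetCount
  have hmap : (List.range (w.length + 1 - i)).map
      (fun j => weight (fun a : α => if a ∈ X then 2 else 1) ((w.drop j).take i))
      = ((List.range (w.length + 1 - i)).map
          (fun j => ((w.drop j).take i).countP (fun a => a ∈ X))).map (i + ·) := by
    rw [List.map_map]
    apply List.map_congr_left
    intro j hj
    rw [List.mem_range] at hj
    have hlen : ((w.drop j).take i).length = i := by
      simp [List.length_take, List.length_drop]; omega
    simp only [Function.comp]
    rw [weight_eq X, hlen]
  rw [hmap, foldr_max_add]
  simp
  omega

lemma weight_take {α : Type*} [DecidableEq α] (X : Finset α) (w : List α) (i : ℕ)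
    (hi : i ≤ w.length) :
    weight (fun a : α => if a ∈ X then 2 else 1) (w.take i)
      = i + (w.take i).countP (fun a => a ∈ X) := by
  rw [weight_eq X]
  simp [List.length_take]
  omega

/-- Subset prefix normality is expressible by weighted prefix normality: with the
weight measure `μ(x) = 2` for `x ∈ X` and `μ(y) = 1` for `y ∉ X` (values in `(ℕ,+)`),
a word is `μ`-prefix normal iff it is `X`-prefix normal. -/
theorem subset_pn_iff_weighted_pn {α : Type*} [Fintype α] [DecidableEq α]
    (X : Finset α) (w : List α) :
    PrefixNormal (fun a : α => if a ∈ X then 2 else 1) w ↔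
      ∀ i ≤ w.length, maxSubsetCount X w i = (w.take i).countP (fun a => a ∈ X) := by
  constructor
  · intro h i hi
    have := h i hi
    rw [factorWeight_eq_s19 X w i hi, weight_take X w i hi] at this
    omega
  · intro h i hi
    rw [factorWeight_eq_s19 X w i hi, weight_take X w i hi, h i hi]
end
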